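/- Let R be a finitely generated associative unital K-algebra with filtration R^{(n)} by spans of monomials of length ≤ n, and let I be a right ideal of R. If the growth function Γ_I(n) = dim(I ∩ R^{(n)}) is not ≼ the cogrowth function Γ_{R/I}(n) = dim R^{(n)} − dim(I ∩ R^{(n)}) (in the preorder Γ₁ ≼ Γ₂ ⟺ ∃C > 0, ∀n, Γ₁(n) ≤ Γ₂(Cn)), then for every nonzero r ∈ R the right ideal quotient (I : r) = {s ∈ R : rs ∈ I} is nonzero. -/
import Mathlib


/-- `R^{(n)}`: the span of products of at most `n` elements of the generating set `X`. -/
def monomialSpan (K : Type*) {R : Type*} [Field K] [Ring R] [Algebra K R]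
    (X : Set R) (n : ℕ) : Submodule K R :=
  Submodule.span K {r | ∃ l : List R, l.length ≤ n ∧ (∀ x ∈ l, x ∈ X) ∧ l.prod = r}

/-- The growth function of the algebra `R`: `Γ_R(n) = dim R^{(n)}`. -/
noncomputable def algGrowth (K : Type*) {R : Type*} [Field K] [Ring R] [Algebra K R]
    (X : Set R) (n : ℕ) : ℕ :=
  Module.finrank K ↥(monomialSpan K X n)

/-- The growth function of a right ideal (or subspace) `I`: `Γ_I(n) = dim (I ∩ R^{(n)})`. -/
noncomputable def idealGrowth (K : Type*) {R : Type*} [Field K] [Ring R] [Algebra K R]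
    (X : Set R) (I : Submodule K R) (n : ℕ) : ℕ :=
  Module.finrank K ↥(I ⊓ monomialSpan K X n)

/-- The cogrowth function of `I`: `Γ_{R/I}(n) = dim R^{(n)} - dim (I ∩ R^{(n)})`. -/
noncomputable def idealCogrowth (K : Type*) {R : Type*} [Field K] [Ring R] [Algebra K R]
    (X : Set R) (I : Submodule K R) (n : ℕ) : ℕ :=
  algGrowth K X n - idealGrowth K X I n

/-- A `K`-subspace of `R` which is a right ideal. -/
def IsRightIdeal (K : Type*) {R : Type*} [Field K] [Ring R] [Algebra K R]
    (I : Submodule K R) : Prop :=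
  ∀ a ∈ I, ∀ r : R, a * r ∈ I

/-- The preorder on growth functions: `f ≼ g` iff `f(n) ≤ g(Cn)` for some `C`. -/
def GrowthLE (f g : ℕ → ℕ) : Prop := ∃ C : ℕ, 0 < C ∧ ∀ n, f n ≤ g (C * n)

section Aux
variable {K R : Type*} [Field K] [Ring R] [Algebra K R]

lemma monomialSpan_mono (X : Set R) : Monotone (monomialSpan K X) := by
  intro m n hmn
  apply Submodule.span_mono
  rintro r ⟨l, hl, hX, hp⟩
  exact ⟨l, hl.trans hmn, hX, hp⟩

lemma monomialSpan_fd (X : Finset R) (n : ℕ) :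
    FiniteDimensional K (monomialSpan K (X : Set R) n) := by
  apply FiniteDimensional.span_of_finite
  have hfin : {l : List R | l.length ≤ n ∧ ∀ x ∈ l, x ∈ (X : Set R)}.Finite := by
    have : {l : List R | l.length ≤ n ∧ ∀ x ∈ l, x ∈ (X : Set R)} ⊆
        (List.map (Subtype.val : {x : R // x ∈ X} → R)) '' {l | l.length ≤ n} := by
      rintro l ⟨hl, hX⟩
      refine ⟨l.attach.map fun x => ⟨x.1, hX x.1 x.2⟩, by simpa using hl, by simp⟩
    exact Set.Finite.subset ((List.finite_length_le _ n).image _) this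
  have : {r : R | ∃ l : List R, l.length ≤ n ∧ (∀ x ∈ l, x ∈ (X : Set R)) ∧ l.prod = r} ⊆
      List.prod '' {l : List R | l.length ≤ n ∧ ∀ x ∈ l, x ∈ (X : Set R)} := by
    rintro r ⟨l, h1, h2, h3⟩
    exact ⟨l, ⟨h1, h2⟩, h3⟩
  exact Set.Finite.subset (hfin.image _) this

lemma mul_mem_monomialSpan {X : Set R} {a b : R} {m n : ℕ}
    (ha : a ∈ monomialSpan K X m) (hb : b ∈ monomialSpan K X n) :
    a * b ∈ monomialSpan K X (m + n) := by
  have h1 : a * b ∈ monomialSpan K X m * monomialSpan K X n :=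
    Submodule.mul_mem_mul ha hb
  have h2 : monomialSpan K X m * monomialSpan K X n ≤ monomialSpan K X (m + n) := by
    rw [monomialSpan, monomialSpan, Submodule.span_mul_span]
    apply Submodule.span_mono
    rintro r ⟨x, ⟨lx, hlx, hXx, hpx⟩, y, ⟨ly, hly, hXy, hpy⟩, rfl⟩
    refine ⟨lx ++ ly, by simp [Nat.add_le_add hlx hly], ?_, by simp [← hpx, ← hpy]⟩
    intro z hz
    rcases List.mem_append.1 hz with h | h
    · exact hXx z h
    · exact hXy z h
  exact h2 h1

lemma exists_mem_monomialSpan (X : Set R) (hgen : Algebra.adjoin K X = ⊤) (r : R) :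
    ∃ m : ℕ, r ∈ monomialSpan K X m := by
  have hsup : (⊤ : Submodule K R) ≤ ⨆ n, monomialSpan K X n := by
    have : Subalgebra.toSubmodule (Algebra.adjoin K X) = Submodule.span K (Submonoid.closure X) :=
      Algebra.adjoin_eq_span K X
    rw [hgen] at this
    rw [← show Subalgebra.toSubmodule (⊤ : Subalgebra K R) = (⊤ : Submodule K R) from rfl, this]
    rw [Submodule.span_le]
    intro x hx
    obtain ⟨l, hl, hp⟩ := Submonoid.exists_list_of_mem_closure hx
    have : x ∈ monomialSpan K X l.length :=
      Submodule.subset_span ⟨l, le_rfl, hl, hp⟩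
    exact Submodule.mem_iSup_of_directed _ ((monomialSpan_mono X).directed_le) |>.2 ⟨_, this⟩
  have := hsup (Submodule.mem_top (x := r))
  exact (Submodule.mem_iSup_of_directed _ ((monomialSpan_mono X).directed_le)).1 this

end Aux

section Aux2
variable {K R : Type*} [Field K] [Ring R] [Algebra K R]

lemma idealGrowth_le_algGrowth (X : Finset R) (I : Submodule K R) (n : ℕ) :
    idealGrowth K (X : Set R) I n ≤ algGrowth K (X : Set R) n := by
  haveI := monomialSpan_fd (K := K) X n
  exact Submodule.finrank_mono inf_le_right

lemma idealCogrowth_mono (X : Finset R) (I : Submodule K R) {n n' : ℕ} (hnn' : n ≤ n') :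
    idealCogrowth K (X : Set R) I n ≤ idealCogrowth K (X : Set R) I n' := by
  haveI := monomialSpan_fd (K := K) X n
  haveI := monomialSpan_fd (K := K) X n'
  have hWW' : monomialSpan K (X : Set R) n ≤ monomialSpan K (X : Set R) n' :=
    monomialSpan_mono _ hnn'
  haveI : FiniteDimensional K ↥(I ⊓ monomialSpan K (X : Set R) n') :=
    Submodule.finiteDimensional_of_le (inf_le_right : _ ≤ monomialSpan K (X : Set R) n')
  have hkey := Submodule.finrank_sup_add_finrank_inf_eq (monomialSpan K (X : Set R) n)
    (I ⊓ monomialSpan K (X : Set R) n')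
  have hinf : monomialSpan K (X : Set R) n ⊓ (I ⊓ monomialSpan K (X : Set R) n')
      = I ⊓ monomialSpan K (X : Set R) n :=
    le_antisymm (le_inf (inf_le_right.trans inf_le_left) inf_le_left)
      (le_inf inf_le_right (le_inf inf_le_left (inf_le_right.trans hWW')))
  rw [hinf] at hkey
  have hsup : Module.finrank K ↥(monomialSpan K (X : Set R) n ⊔ (I ⊓ monomialSpan K (X : Set R) n'))
      ≤ Module.finrank K ↥(monomialSpan K (X : Set R) n') :=
    Submodule.finrank_mono (sup_le hWW' inf_le_right)
  have h1 := idealGrowth_le_algGrowth (K := K) X I n'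
  simp only [idealCogrowth, idealGrowth, algGrowth] at *
  omega

lemma key_ineq (X : Finset R) (I : Submodule K R) {r : R} {m : ℕ}
    (hm : r ∈ monomialSpan K (X : Set R) m)
    (hker : ∀ s : R, r * s ∈ I → s = 0) (n : ℕ) :
    idealGrowth K (X : Set R) I n ≤ idealCogrowth K (X : Set R) I (m + n) := by
  haveI := monomialSpan_fd (K := K) X n
  haveI := monomialSpan_fd (K := K) X (m + n)
  haveI : FiniteDimensional K ↥(I ⊓ monomialSpan K (X : Set R) n) :=
    Submodule.finiteDimensional_of_le (inf_le_right : _ ≤ monomialSpan K (X : Set R) n)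
  haveI : FiniteDimensional K ↥(I ⊓ monomialSpan K (X : Set R) (m + n)) :=
    Submodule.finiteDimensional_of_le (inf_le_right : _ ≤ monomialSpan K (X : Set R) (m + n))
  have hinj : Function.Injective (LinearMap.mulLeft K r) := by
    intro a b hab
    have hI : r * (a - b) ∈ I := by
      simp only [LinearMap.mulLeft_apply] at hab
      rw [mul_sub, hab, sub_self]; exact I.zero_mem
    exact sub_eq_zero.mp (hker _ hI)
  haveI : FiniteDimensional K
      ↥((I ⊓ monomialSpan K (X : Set R) n).map (LinearMap.mulLeft K r)) :=
    Module.Finite.map _ _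
  have hAdim : Module.finrank K
        ↥((I ⊓ monomialSpan K (X : Set R) n).map (LinearMap.mulLeft K r))
      = Module.finrank K ↥(I ⊓ monomialSpan K (X : Set R) n) :=
    (Submodule.equivMapOfInjective _ hinj _).finrank_eq.symm
  have hAW : (I ⊓ monomialSpan K (X : Set R) n).map (LinearMap.mulLeft K r)
      ≤ monomialSpan K (X : Set R) (m + n) := by
    rintro x ⟨s, hs, rfl⟩
    exact mul_mem_monomialSpan hm hs.2
  have hdisj : (I ⊓ monomialSpan K (X : Set R) n).map (LinearMap.mulLeft K r)
      ⊓ (I ⊓ monomialSpan K (X : Set R) (m + n)) = ⊥ := by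
    rw [Submodule.eq_bot_iff]
    rintro x ⟨⟨s, hs, rfl⟩, hxI, -⟩
    have : s = 0 := hker s hxI
    simp [this]
  have hkey := Submodule.finrank_sup_add_finrank_inf_eq
    ((I ⊓ monomialSpan K (X : Set R) n).map (LinearMap.mulLeft K r))
    (I ⊓ monomialSpan K (X : Set R) (m + n))
  rw [hdisj] at hkey
  have hsup : Module.finrank K
      ↥((I ⊓ monomialSpan K (X : Set R) n).map (LinearMap.mulLeft K r)
        ⊔ (I ⊓ monomialSpan K (X : Set R) (m + n)))
      ≤ Module.finrank K ↥(monomialSpan K (X : Set R) (m + n)) :=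
    Submodule.finrank_mono (sup_le hAW inf_le_right)
  simp only [finrank_bot, add_zero] at hkey
  simp only [idealCogrowth, idealGrowth, algGrowth]
  omega

end Aux2

/-- If `Γ_I ⋠ Γ_{R/I}`, then every nonzero `r ∈ R` has nonzero right ideal quotient
`(I : r)`. -/
theorem quotient_ne_zero_of_growth {K R : Type*} [Field K] [Ring R] [Algebra K R]
    (X : Finset R) (hgen : Algebra.adjoin K (X : Set R) = ⊤)
    (I : Submodule K R) (hI : IsRightIdeal K I)
    (h : ¬ GrowthLE (idealGrowth K (X : Set R) I) (idealCogrowth K (X : Set R) I)) :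
    ∀ r : R, r ≠ 0 → ∃ s : R, s ≠ 0 ∧ r * s ∈ I := by
  intro r hr
  haveI : Nontrivial R := nontrivial_of_ne r 0 hr
  by_cases h1 : (1 : R) ∈ I
  · exact ⟨1, one_ne_zero, by simpa using hI 1 h1 r⟩
  by_contra hcon
  push_neg at hcon
  apply h
  have hker : ∀ s : R, r * s ∈ I → s = 0 := by
    intro s hs
    by_contra h0
    exact hcon s h0 hs
  obtain ⟨m, hm⟩ := exists_mem_monomialSpan (X : Set R) hgen r
  refine ⟨m + 1, Nat.succ_pos _, fun n => ?_⟩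
  rcases Nat.eq_zero_or_pos n with rfl | hn
  · have hbot : I ⊓ monomialSpan K (X : Set R) 0 = ⊥ := by
      rw [Submodule.eq_bot_iff]
      intro x hx
      have hxI : x ∈ I := hx.1
      have hx0 := hx.2
      have hspan : monomialSpan K (X : Set R) 0 = Submodule.span K {1} := by
        unfold monomialSpan; congr 1; ext y
        constructor
        · rintro ⟨l, hl, -, rfl⟩
          rw [List.length_eq_zero_iff.mp (Nat.le_zero.mp hl)]
          simp
        · rintro rfl; exact ⟨[], by simp⟩
      rw [hspan] at hx0
      obtain ⟨c, rfl⟩ := Submodule.mem_span_singleton.mp hx0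
      by_contra hne
      have hc : c ≠ 0 := by rintro rfl; simp at hne
      exact h1 (by simpa [smul_smul, inv_mul_cancel₀ hc] using I.smul_mem c⁻¹ hxI)
    have : idealGrowth K (X : Set R) I 0 = 0 := by
      rw [idealGrowth, hbot]
      exact finrank_bot K R
    omega
  · calc idealGrowth K (X : Set R) I n ≤ idealCogrowth K (X : Set R) I (m + n) :=
          key_ineq X I hm hker n
      _ ≤ idealCogrowth K (X : Set R) I ((m + 1) * n) :=
          idealCogrowth_mono X I (by nlinarith)
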